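/- Let s > 2 be an integer. For digits c_1,...,c_n ∈ {1,...,s-1} and any p ∈ {1,...,s-2}, the cylinders of the set S = { ∑ α_k / s^{α_1+...+α_k} : α_k ∈ {1,...,s-1} } satisfy inf Δ_{c_1...c_n p} > sup Δ_{c_1...c_n [p+1]}; in particular Δ_{c_1...c_n p} and Δ_{c_1...c_n [p+1]} are disjoint. -/

import Mathlib

/-- The set `S` of sums `∑ αₙ / s^(α₁+⋯+αₙ)` over digit sequences with values in `{1,…,s-1}`. -/
def Sset (s : ℕ) : Set ℝ :=
  {x : ℝ | ∃ α : ℕ → ℕ, (∀ n, 1 ≤ α n ∧ α n ≤ s - 1) ∧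
    x = ∑' n : ℕ, (α n : ℝ) / (s : ℝ) ^ (∑ k ∈ Finset.range (n + 1), α k)}

/-- The cylinder `Δ_{c₁…cₙ}` of rank `n`: the image of `Sset s` under the affine map
`y ↦ ∑_{k=1}^n cₖ/s^(c₁+⋯+cₖ) + s^{-(c₁+⋯+cₙ)} · y`. -/
def cyl (s n : ℕ) (c : ℕ → ℕ) : Set ℝ :=
  (fun y : ℝ =>
    (∑ k ∈ Finset.range n, (c k : ℝ) / (s : ℝ) ^ (∑ j ∈ Finset.range (k + 1), c j)) +
      ((s : ℝ) ^ (∑ k ∈ Finset.range n, c k))⁻¹ * y) '' Sset s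

lemma Sset_nonempty (s : ℕ) (hs : 2 < s) : (Sset s).Nonempty :=
  ⟨_, fun _ => s - 1, fun _ => ⟨(by omega : 1 ≤ s - 1), Nat.le_refl _⟩, rfl⟩

lemma Sset_nonneg {s : ℕ} {x : ℝ} (hx : x ∈ Sset s) : 0 ≤ x := by
  obtain ⟨α, hα, rfl⟩ := hx
  exact tsum_nonneg fun n => by positivity

lemma term_le {s : ℕ} (hs : 2 < s) {α : ℕ → ℕ} (hα : ∀ n, 1 ≤ α n ∧ α n ≤ s - 1) (n : ℕ) :
    (α n : ℝ) / (s : ℝ) ^ (∑ k ∈ Finset.range (n + 1), α k) ≤ (1 / s : ℝ) ^ (n + 1) := by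
  have hs0 : (0:ℝ) < s := by exact_mod_cast (by omega : 0 < s)
  have key : α n * s ^ (n + 1) ≤ s ^ (∑ k ∈ Finset.range (n + 1), α k) := by
    have h1 : n + α n ≤ ∑ k ∈ Finset.range (n + 1), α k := by
      rw [Finset.sum_range_succ]
      have : n ≤ ∑ k ∈ Finset.range n, α k := by
        calc n = ∑ _k ∈ Finset.range n, 1 := by simp
        _ ≤ _ := Finset.sum_le_sum fun k _ => (hα k).1
      omega
    have h2 : α n ≤ s ^ (α n - 1) := by
      have h : α n - 1 < s ^ (α n - 1) := Nat.lt_pow_self (show 1 < s by omega)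
      have := (hα n).1
      omega
    calc α n * s ^ (n + 1) ≤ s ^ (α n - 1) * s ^ (n + 1) := Nat.mul_le_mul_right _ h2
      _ = s ^ (α n - 1 + (n + 1)) := (pow_add s _ _).symm
      _ ≤ s ^ (∑ k ∈ Finset.range (n + 1), α k) := by
          have h3 : α n - 1 + (n + 1) ≤ ∑ k ∈ Finset.range (n + 1), α k := by
            have := (hα n).1; omega
          exact Nat.pow_le_pow_right (by omega) h3
  rw [div_pow, one_pow, div_le_div_iff₀ (by positivity) (by positivity), one_mul]
  exact_mod_cast key

lemma Sset_le {s : ℕ} (hs : 2 < s) {x : ℝ} (hx : x ∈ Sset s) : x ≤ 1 / ((s : ℝ) - 1) := by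
  obtain ⟨α, hα, rfl⟩ := hx
  have hs0 : (0:ℝ) < s := by exact_mod_cast (by omega : 0 < s)
  have hr0 : (0:ℝ) ≤ 1 / s := by positivity
  have hr1 : (1 / s : ℝ) < 1 := by
    rw [div_lt_one hs0]; exact_mod_cast (by omega : 1 < s)
  have hgeo : Summable fun n : ℕ => (1 / s : ℝ) ^ (n + 1) :=
    (summable_geometric_of_lt_one hr0 hr1).comp_injective (add_left_injective 1)
  have hsum : Summable fun n : ℕ =>
      (α n : ℝ) / (s : ℝ) ^ (∑ k ∈ Finset.range (n + 1), α k) :=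
    Summable.of_nonneg_of_le (fun n => by positivity) (term_le hs hα) hgeo
  calc (∑' n : ℕ, (α n : ℝ) / (s : ℝ) ^ (∑ k ∈ Finset.range (n + 1), α k))
      ≤ ∑' n : ℕ, (1 / s : ℝ) ^ (n + 1) := hsum.tsum_le_tsum (term_le hs hα) hgeo
    _ = 1 / ((s : ℝ) - 1) := by
        have : ∀ n : ℕ, (1 / s : ℝ) ^ (n + 1) = (1 / s) * (1 / s) ^ n := fun n => pow_succ' _ _
        rw [tsum_congr this, tsum_mul_left, tsum_geometric_of_lt_one hr0 hr1]
        have h1 : (s:ℝ) ≠ 0 := ne_of_gt hs0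
        have h2 : (s:ℝ) - 1 ≠ 0 := by
          have : (2:ℝ) < s := by exact_mod_cast hs
          intro h; linarith
        field_simp

lemma cyl_mem_iff (s n : ℕ) (c : ℕ → ℕ) (q : ℕ) {x : ℝ} :
    x ∈ cyl s (n + 1) (Function.update c n q) ↔ ∃ y ∈ Sset s,
      x = (∑ k ∈ Finset.range n, (c k : ℝ) / (s : ℝ) ^ (∑ j ∈ Finset.range (k + 1), c j))
        + (q : ℝ) / (s : ℝ) ^ ((∑ k ∈ Finset.range n, c k) + q)
        + ((s : ℝ) ^ ((∑ k ∈ Finset.range n, c k) + q))⁻¹ * y := by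
  have hinner : ∀ k < n, (∑ j ∈ Finset.range (k + 1), Function.update c n q j)
      = ∑ j ∈ Finset.range (k + 1), c j := by
    intro k hk
    exact Finset.sum_congr rfl fun j hj =>
      Function.update_of_ne (by simp only [Finset.mem_range] at hj; omega) _ _
  have hAsum : (∑ k ∈ Finset.range (n + 1), Function.update c n q k)
      = (∑ k ∈ Finset.range n, c k) + q := by
    rw [Finset.sum_range_succ, Function.update_self]
    congr 1
    exact Finset.sum_congr rfl fun k hk =>
      Function.update_of_ne (by simp only [Finset.mem_range] at hk; omega) _ _
  have hbase : (∑ k ∈ Finset.range (n + 1), ((Function.update c n q k : ℕ) : ℝ) /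
        (s : ℝ) ^ (∑ j ∈ Finset.range (k + 1), Function.update c n q j))
      = (∑ k ∈ Finset.range n, (c k : ℝ) / (s : ℝ) ^ (∑ j ∈ Finset.range (k + 1), c j))
        + (q : ℝ) / (s : ℝ) ^ ((∑ k ∈ Finset.range n, c k) + q) := by
    rw [Finset.sum_range_succ, Function.update_self, hAsum]
    congr 1
    refine Finset.sum_congr rfl fun k hk => ?_
    simp only [Finset.mem_range] at hk
    rw [Function.update_of_ne (by omega), hinner k hk]
  constructor
  · rintro ⟨y, hy, rfl⟩
    exact ⟨y, hy, by rw [hbase, hAsum]⟩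
  · rintro ⟨y, hy, rfl⟩
    exact ⟨y, hy, by rw [hbase, hAsum]⟩

/-- Subcylinders are right-to-left situated: for `p ∈ {1,…,s-2}`,
`inf Δ_{c₁…cₙp} > sup Δ_{c₁…cₙ[p+1]}`; in particular the two cylinders are disjoint. -/
theorem stmt8 (s n : ℕ) (hs : 2 < s) (c : ℕ → ℕ)
    (hc : ∀ k < n, 1 ≤ c k ∧ c k ≤ s - 1) (p : ℕ) (hp : 1 ≤ p) (hp' : p ≤ s - 2) :
    sSup (cyl s (n + 1) (Function.update c n (p + 1))) <
        sInf (cyl s (n + 1) (Function.update c n p)) ∧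
      Disjoint (cyl s (n + 1) (Function.update c n p))
        (cyl s (n + 1) (Function.update c n (p + 1))) := by
  have hs0 : (0:ℝ) < s := by exact_mod_cast (by omega : 0 < s)
  have hs1 : (1:ℝ) < (s : ℝ) - 1 := by
    have : (2:ℝ) < s := by exact_mod_cast hs
    linarith
  set b := ∑ k ∈ Finset.range n, (c k : ℝ) / (s : ℝ) ^ (∑ j ∈ Finset.range (k + 1), c j)
    with hb
  set A := ∑ k ∈ Finset.range n, c k with hA
  set U : ℝ := b + ((p:ℝ) + 1) / (s : ℝ) ^ (A + (p + 1))
    + ((s : ℝ) ^ (A + (p + 1)))⁻¹ * (1 / ((s : ℝ) - 1)) with hU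
  set L : ℝ := b + (p : ℝ) / (s : ℝ) ^ (A + p) with hL
  have hub : ∀ x ∈ cyl s (n + 1) (Function.update c n (p + 1)), x ≤ U := by
    intro x hx
    obtain ⟨y, hy, rfl⟩ := (cyl_mem_iff s n c (p + 1)).mp hx
    have h1 : y ≤ 1 / ((s : ℝ) - 1) := Sset_le hs hy
    have h2 : (0:ℝ) < ((s : ℝ) ^ (A + (p + 1)))⁻¹ := by positivity
    rw [hU]
    push_cast
    gcongr
  have hlb : ∀ x ∈ cyl s (n + 1) (Function.update c n p), L ≤ x := by
    intro x hx
    obtain ⟨y, hy, rfl⟩ := (cyl_mem_iff s n c p).mp hx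
    have h1 : 0 ≤ y := Sset_nonneg hy
    have h2 : (0:ℝ) ≤ ((s : ℝ) ^ (A + p))⁻¹ * y := by positivity
    rw [hL]
    linarith
  have hUL : U < L := by
    rw [hU, hL]
    set X : ℝ := (s : ℝ) ^ (A + p) with hX
    have hXpos : (0:ℝ) < X := by positivity
    have hrw : (s : ℝ) ^ (A + (p + 1)) = X * s := by
      rw [hX, show A + (p + 1) = (A + p) + 1 from by omega, pow_succ]
    have hM : (1 / ((s : ℝ) - 1)) < 1 := by
      rw [div_lt_one (by linarith)]; linarith
    have hps : (p : ℝ) + 2 ≤ (p : ℝ) * s := by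
      have h3 : (3:ℝ) ≤ s := by exact_mod_cast (by omega : 3 ≤ s)
      have hp1 : (1:ℝ) ≤ p := by exact_mod_cast hp
      nlinarith
    have hkey : ((p:ℝ) + 1) / (X * s) + (X * s)⁻¹ * (1 / ((s : ℝ) - 1)) < (p : ℝ) / X := by
      calc ((p:ℝ) + 1) / (X * s) + (X * s)⁻¹ * (1 / ((s : ℝ) - 1))
          = (((p:ℝ) + 1) + 1 / ((s : ℝ) - 1)) / (X * s) := by ring
        _ < ((p:ℝ) * s) / (X * s) := by gcongr ?_ / ?_ <;> linarith
        _ = (p : ℝ) / X := mul_div_mul_right _ _ (ne_of_gt hs0)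
    rw [hrw]
    linarith
  have hne1 : (cyl s (n + 1) (Function.update c n (p + 1))).Nonempty :=
    (Sset_nonempty s hs).image _
  have hne2 : (cyl s (n + 1) (Function.update c n p)).Nonempty :=
    (Sset_nonempty s hs).image _
  have hsup : sSup (cyl s (n + 1) (Function.update c n (p + 1))) ≤ U := csSup_le hne1 hub
  have hinf : L ≤ sInf (cyl s (n + 1) (Function.update c n p)) := le_csInf hne2 hlb
  refine ⟨lt_of_le_of_lt hsup (lt_of_lt_of_le hUL hinf), ?_⟩
  rw [Set.disjoint_left]
  intro x hx hx'
  exact absurd (lt_of_le_of_lt (hub x hx') hUL) (not_lt.mpr (hlb x hx))
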